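/- Let A be a unital C*-algebra, τ : A → ℂ a continuous linear functional that is tracial (τ(xy) = τ(yx)), positive (τ(x*x) is a nonnegative real for all x), and faithful (τ(x*x) = 0 implies x = 0). Let ∂₁, ∂₂, ∂₃, ∂₄ be continuous ℂ-linear τ-invariant derivations on A satisfying ∂ᵢ(x*) = −(∂ᵢ(x))* for all x. For a self-adjoint f ∈ A set EH(f) := −(3/2) Σᵢ₌₁⁴ τ( 2·∂ᵢ((∂ᵢ e^f)·e^{−f})·e^f + (∂ᵢ e^f)·e^{−f}·(∂ᵢ e^f) ). Then EH(f) is a nonpositive real number, and EH(f) = 0 if and only if ∂ᵢ(e^f) = 0 for all i = 1, …, 4. -/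

import Mathlib

open NormedSpace ComplexOrder

/-- **Non-positivity and extremum of the Einstein–Hilbert action on the
noncommutative 4-torus.** For a unital C*-algebra `A` with a continuous tracial, positive
and faithful linear functional `τ` and four continuous `τ`-invariant derivations
satisfying `∂ᵢ(x*) = −(∂ᵢx)*`, and self-adjoint `f`, the Einstein–Hilbert action
`EH(f) = −(3/2) Σᵢ τ(2·∂ᵢ((∂ᵢe^f)e^{−f})·e^f + (∂ᵢe^f)e^{−f}(∂ᵢe^f))` is a nonpositive
real number, and it vanishes iff `∂ᵢ(e^f) = 0` for all `i`. -/
theorem stmt_2 {A : Type*} [NormedRing A] [StarRing A] [CStarRing A]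
    [NormedAlgebra ℂ A] [CompleteSpace A] [StarModule ℂ A]
    (τ : A →L[ℂ] ℂ) (hτ : ∀ x y : A, τ (x * y) = τ (y * x))
    (hpos : ∀ x : A, 0 ≤ τ (star x * x))
    (hfaithful : ∀ x : A, τ (star x * x) = 0 → x = 0)
    (D : Fin 4 → A →L[ℂ] A)
    (hD : ∀ i, ∀ x y : A, D i (x * y) = D i x * y + x * D i y)
    (hτD : ∀ i, ∀ x : A, τ (D i x) = 0)
    (hDstar : ∀ i, ∀ x : A, D i (star x) = - star (D i x))
    (f : A) (hf : IsSelfAdjoint f) :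
    (-(3/2 : ℂ) * ∑ i : Fin 4,
        τ (2 * D i (D i (NormedSpace.exp f) * NormedSpace.exp (-f)) * NormedSpace.exp f
            + D i (NormedSpace.exp f) * NormedSpace.exp (-f) * D i (NormedSpace.exp f)) ≤ 0) ∧
    (-(3/2 : ℂ) * ∑ i : Fin 4,
        τ (2 * D i (D i (NormedSpace.exp f) * NormedSpace.exp (-f)) * NormedSpace.exp f
            + D i (NormedSpace.exp f) * NormedSpace.exp (-f) * D i (NormedSpace.exp f)) = 0
      ↔ ∀ i : Fin 4, D i (NormedSpace.exp f) = 0) := by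
  letI : NormedAlgebra ℚ A := NormedAlgebra.restrictScalars ℚ ℂ A
  set u := NormedSpace.exp f with hu
  set g := NormedSpace.exp (-f) with hg
  have hgu : g * u = 1 := by
    rw [hu, hg, ← exp_add_of_commute (Commute.refl f).neg_left, neg_add_cancel, exp_zero]
  set v := NormedSpace.exp (-((2:ℂ)⁻¹ • f)) with hv
  set v' := NormedSpace.exp ((2:ℂ)⁻¹ • f) with hv'
  have hv'v : v' * v = 1 := by
    rw [hv, hv', ← exp_add_of_commute (Commute.refl _).neg_right, add_neg_cancel, exp_zero]
  have hvv : v * v = g := by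
    rw [hv, hg, ← exp_add_of_commute (Commute.refl _)]
    congr 1
    rw [← neg_add, ← add_smul]
    norm_num
  have hvstar : star v = v := by
    rw [hv, star_exp]
    congr 1
    rw [star_neg, star_smul, hf.star_eq]
    norm_num
  have hustar : star u = u := by
    rw [hu, star_exp, hf.star_eq]
  -- key computation of each summand
  have key : ∀ i : Fin 4, τ (2 * D i (D i u * g) * u + D i u * g * D i u)
      = τ (star (v * D i u) * (v * D i u)) := by
    intro i
    have hDu_star : star (D i u) = -(D i u) := by
      have h := hDstar i u
      rw [hustar] at h
      simpa using congrArg Neg.neg h.symm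
    have h1 : D i u * g * D i u = -(star (v * D i u) * (v * D i u)) := by
      rw [star_mul, hvstar, hDu_star]
      simp only [neg_mul, mul_neg, neg_neg, mul_assoc]
      rw [← mul_assoc v v, hvv]
    have h2 : τ (D i (D i u * g) * u) = τ (star (v * D i u) * (v * D i u)) := by
      have e1 : τ (D i ((D i u * g) * u)) = 0 := by
        rw [mul_assoc, hgu, mul_one]
        exact hτD i (D i u)
      rw [hD i (D i u * g) u, map_add] at e1
      have e2 : τ (D i (D i u * g) * u) = -τ (D i u * g * D i u) :=
        eq_neg_of_add_eq_zero_left e1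
      rw [e2, h1, map_neg, neg_neg]
    have h3 : (2 : A) * D i (D i u * g) * u = D i (D i u * g) * u + D i (D i u * g) * u := by
      rw [mul_assoc, two_mul]
    rw [h3, map_add, map_add, h2, h1, map_neg]
    ring
  have hterm : ∀ i : Fin 4, 0 ≤ τ (2 * D i (D i u * g) * u + D i u * g * D i u) := by
    intro i
    rw [key i]
    exact hpos _
  have hSnonneg : 0 ≤ ∑ i : Fin 4, τ (2 * D i (D i u * g) * u + D i u * g * D i u) :=
    Finset.sum_nonneg fun i _ => hterm i
  constructor
  · rw [neg_mul]
    exact neg_nonpos.mpr (mul_nonneg (by norm_num [Complex.le_def]) hSnonneg)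
  · constructor
    · intro h0
      have hS0 : ∑ i : Fin 4, τ (2 * D i (D i u * g) * u + D i u * g * D i u) = 0 := by
        rcases mul_eq_zero.mp h0 with h | h
        · exfalso; revert h; norm_num
        · exact h
      have hall := (Finset.sum_eq_zero_iff_of_nonneg (fun i _ => hterm i)).mp hS0
      intro i
      have ht : τ (star (v * D i u) * (v * D i u)) = 0 := by
        rw [← key i]; exact hall i (Finset.mem_univ i)
      have hw := hfaithful _ ht
      calc D i u = v' * (v * D i u) := by rw [← mul_assoc, hv'v, one_mul]
        _ = 0 := by rw [hw, mul_zero]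
    · intro hDz
      have hz : ∀ i : Fin 4, τ (2 * D i (D i u * g) * u + D i u * g * D i u) = 0 := by
        intro i
        rw [key i, hDz i]
        simp
      rw [Finset.sum_congr rfl fun i _ => hz i]
      simp
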